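/- Big-step acceptance characterization for 1ARA₁ over finite data words: for every finite data word σ over Σ, the automaton A accepts σ iff there exists a finite sequence P₁, …, P_{k−1} of sets of states of A for σ such that {(0, q_I, ∅)} ⇒ P₁ ⇒ ⋯ ⇒ P_{k−1} ⇒ ∅. -/

import Mathlib

def prefixIn {S : Type} (τ : Set (List S)) (f : ℕ → S) : Prop :=
  ∀ k : ℕ, (List.ofFn fun i : Fin (k + 1) => f i) ∈ τ

/-- A two-player game on a graph: positions of player 1 are those satisfying `own1`,
positions of player 2 the others; `rank` is used for the weak winning condition. -/
structure Game (S : Type) where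
  succ : S → S → Prop
  own1 : S → Prop
  rank : S → ℕ

namespace Game

variable {S : Type}

def IsPlay (G : Game S) (π : List S) : Prop := π ≠ [] ∧ π.Chain' G.succ

def Terminal (G : Game S) (p : S) : Prop := ∀ q, ¬ G.succ p q

/-- Does player `l` (`true` = player 1, `false` = player 2) own position `p`? -/
def Owns (G : Game S) (l : Bool) (p : S) : Prop := if l then G.own1 p else ¬ G.own1 p

/-- A strategy for player `l` from `p`, represented as its tree of finite plays. -/
def IsStrategy (G : Game S) (l : Bool) (p : S) (τ : Set (List S)) : Prop :=
  [p] ∈ τ ∧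
  (∀ π ∈ τ, G.IsPlay π ∧ π.head? = some p) ∧
  (∀ π ∈ τ, π ≠ [p] → π.dropLast ∈ τ) ∧
  (∀ π ∈ τ, ∀ q, π.getLast? = some q → G.Owns l q → (∃ q', G.succ q q') →
    ∃! q', G.succ q q' ∧ π ++ [q'] ∈ τ) ∧
  (∀ π ∈ τ, ∀ q, π.getLast? = some q → ¬ G.Owns l q → ∀ q', G.succ q q' → π ++ [q'] ∈ τ)

/-- A strategy is positional if the chosen successor depends only on the current position. -/
def Positional (G : Game S) (l : Bool) (τ : Set (List S)) : Prop :=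
  ∀ π₁ π₂ q q₁ q₂, π₁ ∈ τ → π₂ ∈ τ →
    π₁.getLast? = some q → π₂.getLast? = some q → G.Owns l q →
    π₁ ++ [q₁] ∈ τ → π₂ ++ [q₂] ∈ τ → q₁ = q₂

/-- An infinite play is winning for player `l` iff its eventually-constant rank has the
right parity (even for player 1, odd for player 2). -/
def InfWin (G : Game S) (l : Bool) (f : ℕ → S) : Prop :=
  ∃ N, (∀ j, N ≤ j → G.rank (f j) = G.rank (f N)) ∧
    G.rank (f N) % 2 = (if l then 0 else 1)

/-- A winning strategy: every complete finite play following it ends in an opponent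
position, and every infinite play following it has the right limit-rank parity. -/
def IsWinningStrategy (G : Game S) (l : Bool) (p : S) (τ : Set (List S)) : Prop :=
  G.IsStrategy l p τ ∧
  (∀ π ∈ τ, ∀ q, π.getLast? = some q → G.Terminal q → ¬ G.Owns l q) ∧
  (∀ f : ℕ → S, prefixIn τ f → G.InfWin l f)

end Game

/-- A weak game: finitely branching, with ranks non-increasing along edges. -/
structure WeakGame (S : Type) extends Game S where
  finBranch : ∀ p, {q | succ p q}.Finite
  rank_mono : ∀ p q, succ p q → rank q ≤ rank p

open scoped Classical

/-- A data word: a nonempty (finite or infinite) word together with an equivalence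
relation on its positions. Positions are `i` with `(i : ℕ∞) < len`. -/
structure DataWord (A : Type) where
  len : ℕ∞
  len_pos : 0 < len
  letter : ℕ → A
  sim : ℕ → ℕ → Prop
  sim_refl : ∀ i : ℕ, (i : ℕ∞) < len → sim i i
  sim_symm : ∀ i j : ℕ, sim i j → sim j i
  sim_trans : ∀ i j k : ℕ, sim i j → sim j k → sim i k

def DataWord.IsFinite {A : Type} (σ : DataWord A) : Prop := σ.len ≠ ⊤
def DataWord.IsInfinite {A : Type} (σ : DataWord A) : Prop := σ.len = ⊤
/-- The class of position `i`. -/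
def DataWord.cls {A : Type} (σ : DataWord A) (i : ℕ) : Set ℕ := {j | σ.sim i j}

/-- Tests: current letter, first position, last position, register equality. -/
inductive TestF (A : Type) where
  | letter (a : A)
  | beg
  | last
  | reg (r : ℕ)

/-- Transition formulae of register automata. -/
inductive TransF (A Q : Type) where
  | ite (β : TestF A) (q₁ q₂ : Q)
  | store (r : ℕ) (q : Q)
  | conj (q₁ q₂ : Q)
  | disj (q₁ q₂ : Q)
  | top
  | bot
  | fwd (q : Q)
  | fwdBar (q : Q)
  | bwd (q : Q)
  | bwdBar (q : Q)

namespace TransF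

def locs {A Q : Type} : TransF A Q → List Q
  | .ite _ q₁ q₂ | .conj q₁ q₂ | .disj q₁ q₂ => [q₁, q₂]
  | .store _ q | .fwd q | .fwdBar q | .bwd q | .bwdBar q => [q]
  | .top | .bot => []

/-- Transitions which do not move to another word position. -/
def isLocal {A Q : Type} : TransF A Q → Prop
  | .ite _ _ _ => True
  | .store _ _ => True
  | .conj _ _ => True
  | .disj _ _ => True
  | _ => False

def regs {A Q : Type} : TransF A Q → List ℕ
  | .ite (.reg r) _ _ => [r]
  | .store r _ => [r]
  | _ => []

end TransF

/-- A (two-way alternating) register automaton with `n` registers: ranks are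
non-increasing along transitions and heights strictly decrease along local transitions. -/
structure RA (A : Type) where
  Q : Type
  qI : Q
  n : ℕ
  δ : Q → TransF A Q
  rank : Q → ℕ
  height : Q → ℕ
  rank_le : ∀ q q', q' ∈ (δ q).locs → rank q' ≤ rank q
  height_lt : ∀ q q', (δ q).isLocal → q' ∈ (δ q).locs → height q' < height q
  regs_lt : ∀ q r, r ∈ (δ q).regs → r < n

/-- One-way: no backward moves and no begin-tests. -/
def RA.OneWay {A : Type} (M : RA A) : Prop :=
  ∀ q, match M.δ q with
    | .bwd _ => False
    | .bwdBar _ => False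
    | .ite .beg _ _ => False
    | _ => True

/-- Nondeterministic: no conjunctive branching. -/
def RA.Nondet {A : Type} (M : RA A) : Prop :=
  ∀ q, match M.δ q with
    | .conj _ _ => False
    | _ => True

/-- Universal: no disjunctive branching. -/
def RA.Universal {A : Type} (M : RA A) : Prop :=
  ∀ q, match M.δ q with
    | .disj _ _ => False
    | _ => True

/-- Partial register valuations, mapping registers to classes of the data word. -/
abbrev RegVal : Type := ℕ → Option (Set ℕ)

/-- States of the acceptance game: word position, location, register valuation. -/
abbrev RAState {A : Type} (M : RA A) : Type := ℕ × M.Q × RegVal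

def testHolds {A : Type} (σ : DataWord A) (i : ℕ) (v : RegVal) : TestF A → Prop
  | .letter a => σ.letter i = a
  | .beg => i = 0
  | .last => (i : ℕ∞) + 1 = σ.len
  | .reg r => ∃ C, v r = some C ∧ i ∈ C

/-- The successor relation of the acceptance game of `M` over `σ`. -/
def raSucc {A : Type} (M : RA A) (σ : DataWord A) (s s' : RAState M) : Prop :=
  match M.δ s.2.1 with
  | .ite β q₁ q₂ =>
      (testHolds σ s.1 s.2.2 β ∧ s' = (s.1, q₁, s.2.2)) ∨
      (¬ testHolds σ s.1 s.2.2 β ∧ s' = (s.1, q₂, s.2.2))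
  | .store r q₁ => s' = (s.1, q₁, Function.update s.2.2 r (some (σ.cls s.1)))
  | .conj q₁ q₂ => s' = (s.1, q₁, s.2.2) ∨ s' = (s.1, q₂, s.2.2)
  | .disj q₁ q₂ => s' = (s.1, q₁, s.2.2) ∨ s' = (s.1, q₂, s.2.2)
  | .top => False
  | .bot => False
  | .fwd q₁ => (s.1 : ℕ∞) + 1 < σ.len ∧ s' = (s.1 + 1, q₁, s.2.2)
  | .fwdBar q₁ => (s.1 : ℕ∞) + 1 < σ.len ∧ s' = (s.1 + 1, q₁, s.2.2)
  | .bwd q₁ => 0 < s.1 ∧ s' = (s.1 - 1, q₁, s.2.2)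
  | .bwdBar q₁ => 0 < s.1 ∧ s' = (s.1 - 1, q₁, s.2.2)

/-- Positions of player 1 (the automaton) in the acceptance game: disjunctions,
rejecting states, and blocked moves `X` (at the last position) / `X⁻¹` (at the first). -/
def raOwn1 {A : Type} (M : RA A) (σ : DataWord A) (s : RAState M) : Prop :=
  match M.δ s.2.1 with
  | .disj _ _ => True
  | .bot => True
  | .fwd _ => ¬ ((s.1 : ℕ∞) + 1 < σ.len)
  | .bwd _ => s.1 = 0
  | _ => False

/-- The acceptance game of `M` over `σ` (a weak game). -/
def raGame {A : Type} (M : RA A) (σ : DataWord A) : Game (RAState M) :=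
  { succ := raSucc M σ, own1 := raOwn1 M σ, rank := fun s => M.rank s.2.1 }

def initState {A : Type} (M : RA A) : RAState M := (0, M.qI, fun _ => none)

/-- `M` accepts `σ` iff player 1 has a winning strategy from the initial state. -/
def Accepts {A : Type} (M : RA A) (σ : DataWord A) : Prop :=
  ∃ τ : Set (List (RAState M)), (raGame M σ).IsWinningStrategy true (initState M) τ

/-- A finite play that contains no move to another word position. -/
def NoMove {A : Type} {M : RA A} (π : List (RAState M)) : Prop :=
  π.Chain' (fun s s' => s.1 = s'.1)

/-- `bigTo M σ p P'`: player 1 has a strategy from `p` in the acceptance game such that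
every complete play following it which contains no move to another word position is
winning for player 1, and `P'` is the set of all targets of first moves to another word
position in plays of the strategy. -/
def bigTo {A : Type} (M : RA A) (σ : DataWord A) (p : RAState M)
    (P' : Set (RAState M)) : Prop :=
  ∃ τ : Set (List (RAState M)),
    (raGame M σ).IsStrategy true p τ ∧
    (∀ π ∈ τ, NoMove π → ∀ q, π.getLast? = some q →
      (raGame M σ).Terminal q → ¬ (raGame M σ).Owns true q) ∧
    (∀ f : ℕ → RAState M, prefixIn τ f → (∀ i, (f i).1 = (f 0).1) →
      (raGame M σ).InfWin true f) ∧
    P' = {s' | ∃ π ∈ τ, NoMove π ∧ ∃ s : RAState M, π.getLast? = some s ∧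
      raSucc M σ s s' ∧ s.1 ≠ s'.1 ∧ π ++ [s'] ∈ τ}

/-- The big-step successor relation on sets of states. -/
def setBigTo {A : Type} (M : RA A) (σ : DataWord A) (P P' : Set (RAState M)) : Prop :=
  P.Nonempty ∧ ∃ f : RAState M → Set (RAState M),
    (∀ p ∈ P, bigTo M σ p (f p)) ∧ P' = ⋃ p ∈ P, f p

/-! ### Auxiliary development -/

section BigStepProof

open List

variable {A : Type} {M : RA A} {σ : DataWord A}

private lemma chain'_fst_head_getLast :
    ∀ (l : List (RAState M)), l.Chain' (fun a b => a.1 = b.1) →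
      ∀ a b, l.head? = some a → l.getLast? = some b → a.1 = b.1 := by
  intro l
  induction l with
  | nil => simp
  | cons x t ih =>
    intro h a b ha hb
    simp only [List.head?_cons, Option.some.injEq] at ha
    subst ha
    cases t with
    | nil => simp only [List.getLast?_singleton, Option.some.injEq] at hb; subst hb; rfl
    | cons y t' =>
      unfold List.Chain' at h; rw [List.isChain_cons_cons] at h
      rw [List.getLast?_cons_cons] at hb
      exact h.1.trans (ih h.2 y b rfl hb)

private lemma raSucc_step (hw : M.OneWay) {s s' : RAState M} (h : raSucc M σ s s') :
    (s'.1 = s.1 ∧ M.height s'.2.1 < M.height s.2.1) ∨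
    (s'.1 = s.1 + 1 ∧ (s.1 : ℕ∞) + 1 < σ.len) := by
  have hq := hw s.2.1
  have hh := M.height_lt s.2.1
  unfold raSucc at h
  split at h
  case _ β q₁ q₂ heq =>
    left
    simp only [heq] at hh
    rcases h with ⟨-, rfl⟩ | ⟨-, rfl⟩
    · exact ⟨rfl, hh q₁ trivial (by simp [TransF.locs])⟩
    · exact ⟨rfl, hh q₂ trivial (by simp [TransF.locs])⟩
  case _ r q₁ heq =>
    left; subst h
    simp only [heq] at hh
    exact ⟨rfl, hh q₁ trivial (by simp [TransF.locs])⟩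
  case _ q₁ q₂ heq =>
    left
    simp only [heq] at hh
    rcases h with rfl | rfl
    · exact ⟨rfl, hh q₁ trivial (by simp [TransF.locs])⟩
    · exact ⟨rfl, hh q₂ trivial (by simp [TransF.locs])⟩
  case _ q₁ q₂ heq =>
    left
    simp only [heq] at hh
    rcases h with rfl | rfl
    · exact ⟨rfl, hh q₁ trivial (by simp [TransF.locs])⟩
    · exact ⟨rfl, hh q₂ trivial (by simp [TransF.locs])⟩
  case _ => exact absurd h id
  case _ => exact absurd h id
  case _ q₁ heq =>
    right
    obtain ⟨h1, rfl⟩ := h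
    exact ⟨rfl, h1⟩
  case _ q₁ heq =>
    right
    obtain ⟨h1, rfl⟩ := h
    exact ⟨rfl, h1⟩
  case _ q₁ heq => simp only [heq] at hq
  case _ q₁ heq => simp only [heq] at hq

private lemma no_inf (hw : M.OneWay) (hσ : σ.IsFinite) :
    ∀ f : ℕ → RAState M, (∀ i, raSucc M σ (f i) (f (i + 1))) → False := by
  intro f hf
  obtain ⟨N, hN⟩ : ∃ N : ℕ, σ.len = (N : ℕ∞) := ⟨σ.len.toNat, (ENat.coe_toNat hσ).symm⟩
  have hstep : ∀ i, ((f (i+1)).1 = (f i).1 ∧ M.height (f (i+1)).2.1 < M.height (f i).2.1) ∨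
      ((f (i+1)).1 = (f i).1 + 1 ∧ (f (i+1)).1 ≤ N) := by
    intro i
    rcases raSucc_step hw (hf i) with h | ⟨h1, h2⟩
    · exact Or.inl h
    · refine Or.inr ⟨h1, ?_⟩
      rw [hN] at h2
      rw [h1]
      exact_mod_cast h2.le
  have hbd : ∀ i, (f i).1 ≤ max (f 0).1 N := by
    intro i
    induction i with
    | zero => exact le_max_left _ _
    | succ i ih =>
      rcases hstep i with ⟨h1, -⟩ | ⟨-, h2⟩
      · omega
      · exact le_trans h2 (le_max_right _ _)
  have hmono : ∀ i j, i ≤ j → (f i).1 ≤ (f j).1 := by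
    have key : ∀ i t, (f i).1 ≤ (f (i + t)).1 := by
      intro i t
      induction t with
      | zero => exact le_refl _
      | succ t ih =>
        have h : i + (t + 1) = (i + t) + 1 := by omega
        rw [h]
        rcases hstep (i + t) with ⟨h1, -⟩ | ⟨h1, -⟩ <;> omega
    intro i j hij
    obtain ⟨t, rfl⟩ := Nat.exists_eq_add_of_le hij
    exact key i t
  -- eventually constant position
  have hec : ∃ i, ∀ j, i ≤ j → (f j).1 = (f i).1 := by
    by_contra hc
    push_neg at hc
    have grow : ∀ n : ℕ, ∃ i, (f 0).1 + n ≤ (f i).1 := by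
      intro n
      induction n with
      | zero => exact ⟨0, le_refl _⟩
      | succ n ih =>
        obtain ⟨i, hi⟩ := ih
        obtain ⟨j, hij, hne⟩ := hc i
        have := hmono i j hij
        exact ⟨j, by omega⟩
    obtain ⟨i, hi⟩ := grow (max (f 0).1 N + 1)
    have := hbd i
    omega
  obtain ⟨i0, hi0⟩ := hec
  have hdesc : ∀ t, M.height (f (i0 + t + 1)).2.1 < M.height (f (i0 + t)).2.1 := by
    intro t
    rcases hstep (i0 + t) with ⟨-, h⟩ | ⟨h1, -⟩
    · exact h
    · have e1 := hi0 (i0 + t) (by omega)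
      have e2 := hi0 (i0 + t + 1) (by omega)
      omega
  have : ∀ t, M.height (f (i0 + t)).2.1 + t ≤ M.height (f i0).2.1 := by
    intro t
    induction t with
    | zero => simp
    | succ t ih =>
      have h := hdesc t
      have e : i0 + (t + 1) = i0 + t + 1 := by omega
      rw [e]
      omega
  have := this (M.height (f i0).2.1 + 1)
  omega

private lemma prefixIn_succ {τ : Set (List (RAState M))}
    (hτ : ∀ π ∈ τ, (raGame M σ).IsPlay π)
    {f : ℕ → RAState M} (hf : prefixIn τ f) : ∀ i, raSucc M σ (f i) (f (i + 1)) := by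
  intro i
  have h := (hτ _ (hf (i + 1))).2
  unfold List.Chain' at h; rw [List.isChain_iff_getElem] at h
  have h2 := h i (by simp)
  rw [List.getElem_ofFn, List.getElem_ofFn] at h2
  simpa [raGame] using h2

/-- No infinite play can follow any set of plays of the acceptance game. -/
private lemma no_prefixIn (hw : M.OneWay) (hσ : σ.IsFinite) {τ : Set (List (RAState M))}
    (hτ : ∀ π ∈ τ, (raGame M σ).IsPlay π)
    (f : ℕ → RAState M) (hf : prefixIn τ f) : (raGame M σ).InfWin true f :=
  absurd (prefixIn_succ hτ hf) (fun h => no_inf hw hσ f h)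


private lemma head?_dropLast' {α : Type} : ∀ (l : List α), 2 ≤ l.length →
    l.dropLast.head? = l.head?
  | [], h => by simp at h
  | [a], h => by simp at h
  | a :: b :: t, _ => by simp [List.dropLast]

private lemma not_nomove_boundary {π μ : List (RAState M)} {s s' : RAState M}
    (hl : π.getLast? = some s) (hh : μ.head? = some s') (hne : s.1 ≠ s'.1) :
    ¬ NoMove (π ++ μ) := by
  intro h
  unfold NoMove List.Chain' at h; rw [List.isChain_append] at h
  exact hne (h.2.2 s (by simp [hl]) s' (by simp [hh]))

private lemma decomp_not_lt {π₁ μ₁ π₂ μ₂ : List (RAState M)} {s₁ s₁' : RAState M}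
    (he : π₁ ++ μ₁ = π₂ ++ μ₂)
    (hl₁ : π₁.getLast? = some s₁) (hh₁ : μ₁.head? = some s₁') (hne₁ : s₁.1 ≠ s₁'.1)
    (h₂ : NoMove π₂) : ¬ (π₁.length < π₂.length) := by
  intro hlt
  obtain ⟨μt, rfl⟩ : ∃ t, μ₁ = s₁' :: t := by
    cases μ₁ with
    | nil => simp at hh₁
    | cons a t =>
      simp only [List.head?_cons, Option.some.injEq] at hh₁
      exact ⟨t, by rw [hh₁]⟩
  have hp1 : π₁ ++ [s₁'] <+: π₂ ++ μ₂ := by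
    rw [← he]
    exact ⟨μt, by simp⟩
  have hp2 : π₁ ++ [s₁'] <+: π₂ :=
    List.prefix_of_prefix_length_le hp1 (List.prefix_append _ _) (by simp; omega)
  exact not_nomove_boundary hl₁ (by simp) hne₁ (List.IsChain.prefix h₂ hp2)

private lemma decomp_unique {π₁ μ₁ π₂ μ₂ : List (RAState M)} {s₁ s₁' s₂ s₂' : RAState M}
    (he : π₁ ++ μ₁ = π₂ ++ μ₂)
    (h₁ : NoMove π₁) (hl₁ : π₁.getLast? = some s₁) (hh₁ : μ₁.head? = some s₁')
    (hne₁ : s₁.1 ≠ s₁'.1)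
    (h₂ : NoMove π₂) (hl₂ : π₂.getLast? = some s₂) (hh₂ : μ₂.head? = some s₂')
    (hne₂ : s₂.1 ≠ s₂'.1) : π₁ = π₂ ∧ μ₁ = μ₂ := by
  have hn1 := decomp_not_lt he hl₁ hh₁ hne₁ h₂
  have hn2 := decomp_not_lt he.symm hl₂ hh₂ hne₂ h₁
  have hlen : π₁.length = π₂.length := by omega
  have hp : π₁ <+: π₂ :=
    List.prefix_of_prefix_length_le ⟨μ₁, he⟩ (List.prefix_append _ _) (le_of_eq hlen)
  have hpe : π₁ = π₂ := hp.eq_of_length hlen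
  subst hpe
  exact ⟨rfl, by rwa [List.append_cancel_left_eq] at he⟩

private lemma residual_win (hw : M.OneWay) (hσ : σ.IsFinite) {p : RAState M}
    {τ : Set (List (RAState M))} (hτ : (raGame M σ).IsWinningStrategy true p τ)
    {π : List (RAState M)} {p' : RAState M} (hπ : π ∈ τ) (hext : π ++ [p'] ∈ τ) :
    ∃ τ', (raGame M σ).IsWinningStrategy true p' τ' := by
  obtain ⟨⟨hinit, hplays, hdrop, hmv1, hmv2⟩, hterm, -⟩ := hτ
  have hπne : π ≠ [] := (hplays π hπ).1.1
  have hplays' : ∀ μ ∈ {μ | μ.head? = some p' ∧ π ++ μ ∈ τ},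
      (raGame M σ).IsPlay μ ∧ μ.head? = some p' := by
    rintro μ ⟨hh, hm⟩
    have hne : μ ≠ [] := by intro h; subst h; simp at hh
    exact ⟨⟨hne, ((hplays _ hm).1.2).suffix (List.suffix_append π μ)⟩, hh⟩
  refine ⟨{μ | μ.head? = some p' ∧ π ++ μ ∈ τ}, ⟨⟨⟨rfl, hext⟩, hplays', ?_, ?_, ?_⟩, ?_, ?_⟩⟩
  · -- dropLast closure
    rintro μ ⟨hh, hm⟩ hne
    have hμne : μ ≠ [] := by intro h; subst h; simp at hh
    have hlen2 : 2 ≤ μ.length := by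
      rcases μ with _ | ⟨a, t⟩
      · simp at hh
      · rcases t with _ | ⟨b, t'⟩
        · simp only [List.head?_cons, Option.some.injEq] at hh
          exact absurd (by rw [hh]) hne
        · simp
    have hd := hdrop _ hm (by
      intro h
      have : (π ++ μ).length = 1 := by rw [h]; rfl
      rw [List.length_append] at this
      have h1 : 1 ≤ π.length := List.length_pos_iff.mpr hπne
      omega)
    rw [List.dropLast_append_of_ne_nil hμne] at hd
    exact ⟨by rw [head?_dropLast' μ hlen2]; exact hh, hd⟩
  · -- player 1 moves
    rintro μ ⟨hh, hm⟩ q hlast hown hex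
    have hμne : μ ≠ [] := by intro h; subst h; simp at hh
    obtain ⟨q', ⟨hsucc, hmem⟩, huniq⟩ := hmv1 _ hm q
      (by rw [List.getLast?_append_of_ne_nil (l₁ := π) hμne]; exact hlast) hown hex
    rw [List.append_assoc] at hmem
    refine ⟨q', ⟨hsucc, by rw [List.head?_append_of_ne_nil _ hμne]; exact hh, hmem⟩, ?_⟩
    rintro y ⟨hsy, -, hmy⟩
    rw [← List.append_assoc] at hmy
    exact huniq y ⟨hsy, hmy⟩
  · -- player 2 moves
    rintro μ ⟨hh, hm⟩ q hlast hown q' hsucc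
    have hμne : μ ≠ [] := by intro h; subst h; simp at hh
    have := hmv2 _ hm q
      (by rw [List.getLast?_append_of_ne_nil (l₁ := π) hμne]; exact hlast) hown q' hsucc
    rw [List.append_assoc] at this
    exact ⟨by rw [List.head?_append_of_ne_nil _ hμne]; exact hh, this⟩
  · -- terminal condition
    rintro μ ⟨hh, hm⟩ q hlast ht
    have hμne : μ ≠ [] := by intro h; subst h; simp at hh
    exact hterm _ hm q
      (by rw [List.getLast?_append_of_ne_nil (l₁ := π) hμne]; exact hlast) ht
  · -- infinite plays
    exact fun f hf => no_prefixIn hw hσ (fun μ hμ => (hplays' μ hμ).1) f hf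

private def crossSet (M : RA A) (σ : DataWord A) (τ : Set (List (RAState M))) :
    Set (RAState M) :=
  {s' | ∃ π ∈ τ, NoMove π ∧ ∃ s : RAState M, π.getLast? = some s ∧
    raSucc M σ s s' ∧ s.1 ≠ s'.1 ∧ π ++ [s'] ∈ τ}

private lemma win_bigTo (hw : M.OneWay) (hσ : σ.IsFinite) {p : RAState M}
    (h : ∃ τ, (raGame M σ).IsWinningStrategy true p τ) :
    ∃ P', bigTo M σ p P' ∧ ∀ p' ∈ P',
      (∃ τ', (raGame M σ).IsWinningStrategy true p' τ') ∧
      p'.1 = p.1 + 1 ∧ ((p.1 : ℕ∞) + 1 < σ.len) := by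
  obtain ⟨τ, hτ⟩ := h
  refine ⟨crossSet M σ τ,
    ⟨τ, hτ.1, fun π hπ _ => hτ.2.1 π hπ,
      fun f hf _ => no_prefixIn hw hσ (fun π hm => (hτ.1.2.1 π hm).1) f hf, rfl⟩, ?_⟩
  rintro p' ⟨π, hπ, hnm, s, hlast, hsucc, hne, hext⟩
  have hs : s.1 = p.1 :=
    (chain'_fst_head_getLast π hnm p s (hτ.1.2.1 π hπ).2 hlast).symm
  rcases raSucc_step hw hsucc with ⟨h1, -⟩ | ⟨h1, h2⟩
  · exact absurd h1.symm hne
  · rw [hs] at h1 h2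
    exact ⟨residual_win hw hσ hτ hπ hext, h1, h2⟩


private def glueSet (M : RA A) (σ : DataWord A) (τ₀ : Set (List (RAState M)))
    (ts : RAState M → Set (List (RAState M))) : Set (List (RAState M)) :=
  {ρ | (ρ ∈ τ₀ ∧ NoMove ρ) ∨
    ∃ π μ s s', ρ = π ++ μ ∧ π ∈ τ₀ ∧ NoMove π ∧ π.getLast? = some s ∧
      μ.head? = some s' ∧ raSucc M σ s s' ∧ s.1 ≠ s'.1 ∧ π ++ [s'] ∈ τ₀ ∧ μ ∈ ts s'}

private lemma glue_extA {p : RAState M} {τ₀ : Set (List (RAState M))}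
    {ts : RAState M → Set (List (RAState M))}
    (hplays₀ : ∀ π ∈ τ₀, (raGame M σ).IsPlay π ∧ π.head? = some p)
    (hts1 : ∀ {π : List (RAState M)} {s s' : RAState M}, π ∈ τ₀ → NoMove π →
      π.getLast? = some s → raSucc M σ s s' → s.1 ≠ s'.1 → π ++ [s'] ∈ τ₀ → [s'] ∈ ts s')
    {π : List (RAState M)} {x : RAState M} (hπ : π ∈ τ₀) (hnm : NoMove π) :
    π ++ [x] ∈ glueSet M σ τ₀ ts ↔ π ++ [x] ∈ τ₀ := by
  have hπne : π ≠ [] := (hplays₀ π hπ).1.1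
  obtain ⟨s, hlast⟩ : ∃ s, π.getLast? = some s :=
    Option.isSome_iff_exists.mp (List.getLast?_isSome.mpr hπne)
  constructor
  · rintro (⟨h, -⟩ | ⟨π₂, μ₂, s₂, s₂', heq, hπ₂, hnm₂, hl₂, hh₂, hsucc₂, hne₂, hext₂, hμ₂⟩)
    · exact h
    · have hμ₂ne : μ₂ ≠ [] := by intro h; subst h; simp at hh₂
      have hnlt := decomp_not_lt heq.symm hl₂ hh₂ hne₂ hnm
      have hlen : π₂.length = π.length := by
        have h1 := congrArg List.length heq
        have h2 : 1 ≤ μ₂.length := List.length_pos_iff.mpr hμ₂ne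
        simp only [List.length_append, List.length_cons, List.length_nil] at h1
        omega
      have hp2 : π₂ <+: π :=
        List.prefix_of_prefix_length_le ⟨μ₂, heq.symm⟩ (List.prefix_append _ _)
          (le_of_eq hlen)
      have hpe : π₂ = π := hp2.eq_of_length hlen
      subst hpe
      have hμe : [x] = μ₂ := by rwa [List.append_cancel_left_eq] at heq
      subst hμe  -- μ₂ := [x]? direction
      simp only [List.head?_cons, Option.some.injEq] at hh₂
      subst hh₂
      exact hext₂
  · intro h
    have hchain := (hplays₀ _ h).1.2
    have hsucc : raSucc M σ s x := by
      unfold List.Chain' at hchain; rw [List.isChain_append] at hchain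
      exact hchain.2.2 s (by simp [hlast]) x (by simp)
    by_cases hx : s.1 = x.1
    · refine Or.inl ⟨h, ?_⟩
      unfold NoMove List.Chain'; rw [List.isChain_append]
      refine ⟨hnm, List.isChain_singleton x, ?_⟩
      intro a ha b hb
      simp only [hlast, Option.mem_def, Option.some.injEq] at ha
      simp only [List.head?_cons, Option.mem_def, Option.some.injEq] at hb
      subst ha; subst hb; exact hx
    · exact Or.inr ⟨π, [x], s, x, rfl, hπ, hnm, hlast, rfl, hsucc, hx, h,
        hts1 hπ hnm hlast hsucc hx h⟩

private lemma glue_extB {τ₀ : Set (List (RAState M))}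
    {ts : RAState M → Set (List (RAState M))}
    {π μ : List (RAState M)} {s s' : RAState M}
    (hπ : π ∈ τ₀) (hnm : NoMove π) (hlast : π.getLast? = some s)
    (hh : μ.head? = some s') (hsucc : raSucc M σ s s') (hne : s.1 ≠ s'.1)
    (hext : π ++ [s'] ∈ τ₀) :
    π ++ μ ∈ glueSet M σ τ₀ ts ↔ μ ∈ ts s' := by
  constructor
  · rintro (⟨-, hnm'⟩ | ⟨π₂, μ₂, s₂, s₂', heq, hπ₂, hnm₂, hl₂, hh₂, hsucc₂, hne₂, hext₂, hμ₂⟩)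
    · exact absurd hnm' (not_nomove_boundary hlast hh hne)
    · obtain ⟨hpe, hμe⟩ := decomp_unique heq hnm hlast hh hne hnm₂ hl₂ hh₂ hne₂
      subst hpe; subst hμe
      rw [hh] at hh₂
      injection hh₂ with hh₂
      rw [← hh₂] at hμ₂
      exact hμ₂
  · intro hμ
    exact Or.inr ⟨π, μ, s, s', rfl, hπ, hnm, hlast, hh, hsucc, hne, hext, hμ⟩

private lemma glue_win (hw : M.OneWay) (hσ : σ.IsFinite) {p : RAState M}
    {P' : Set (RAState M)} (hb : bigTo M σ p P')
    (hP' : ∀ p' ∈ P', ∃ τ', (raGame M σ).IsWinningStrategy true p' τ') :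
    ∃ τ, (raGame M σ).IsWinningStrategy true p τ := by
  obtain ⟨τ₀, hs₀, hterm₀, -, hPeq⟩ := hb
  have hch : ∀ p' : RAState M, ∃ τ', p' ∈ P' →
      (raGame M σ).IsWinningStrategy true p' τ' := by
    intro p'
    by_cases h : p' ∈ P'
    · obtain ⟨τ', h'⟩ := hP' p' h
      exact ⟨τ', fun _ => h'⟩
    · exact ⟨∅, fun hc => absurd hc h⟩
  choose ts hts using hch
  obtain ⟨hinit₀, hplays₀, hdrop₀, hmv1₀, hmv2₀⟩ := hs₀
  have hmemP : ∀ {π : List (RAState M)} {s s' : RAState M}, π ∈ τ₀ → NoMove π →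
      π.getLast? = some s → raSucc M σ s s' → s.1 ≠ s'.1 → π ++ [s'] ∈ τ₀ →
      (raGame M σ).IsWinningStrategy true s' (ts s') := by
    intro π s s' hπ hnm hl hsucc hne hext
    exact hts s' (by rw [hPeq]; exact ⟨π, hπ, hnm, s, hl, hsucc, hne, hext⟩)
  have hts1 : ∀ {π : List (RAState M)} {s s' : RAState M}, π ∈ τ₀ → NoMove π →
      π.getLast? = some s → raSucc M σ s s' → s.1 ≠ s'.1 → π ++ [s'] ∈ τ₀ →
      [s'] ∈ ts s' := by
    intro π s s' hπ hnm hl hsucc hne hext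
    exact (hmemP hπ hnm hl hsucc hne hext).1.1
  -- plays of the glued strategy
  have hplaysT : ∀ ρ ∈ glueSet M σ τ₀ ts, (raGame M σ).IsPlay ρ ∧ ρ.head? = some p := by
    rintro ρ (⟨h, -⟩ | ⟨π, μ, s, s', rfl, hπ, hnm, hl, hh, hsucc, hne, hext, hμ⟩)
    · exact hplays₀ _ h
    · have hπne : π ≠ [] := (hplays₀ π hπ).1.1
      have hμpl : (raGame M σ).IsPlay μ ∧ μ.head? = some s' :=
        (hmemP hπ hnm hl hsucc hne hext).1.2.1 μ hμ
      refine ⟨⟨?_, ?_⟩, ?_⟩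
      · simp [List.append_eq_nil_iff, hπne]
      · unfold List.Chain'; rw [List.isChain_append]
        refine ⟨(hplays₀ π hπ).1.2, hμpl.1.2, ?_⟩
        intro a ha b hb
        simp only [hl, Option.mem_def, Option.some.injEq] at ha
        rw [hμpl.2] at hb
        simp only [Option.mem_def, Option.some.injEq] at hb
        subst ha; subst hb
        exact hsucc
      · rw [List.head?_append_of_ne_nil _ hπne]
        exact (hplays₀ π hπ).2
  refine ⟨glueSet M σ τ₀ ts, ⟨⟨?_, hplaysT, ?_, ?_, ?_⟩, ?_, ?_⟩⟩
  · -- initial play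
    exact Or.inl ⟨hinit₀, List.isChain_singleton p⟩
  · -- dropLast closure
    rintro ρ (⟨h, hnm⟩ | ⟨π, μ, s, s', rfl, hπ, hnm, hl, hh, hsucc, hne, hext, hμ⟩) hne'
    · exact Or.inl ⟨hdrop₀ _ h hne', List.IsChain.prefix hnm (List.dropLast_prefix _)⟩
    · have hμne : μ ≠ [] := by intro h; subst h; simp at hh
      rcases μ with _ | ⟨a, t⟩
      · simp at hh
      · simp only [List.head?_cons, Option.some.injEq] at hh
        subst hh
        rcases t with _ | ⟨b, t'⟩
        · rw [List.dropLast_append_of_ne_nil hμne]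
          simp only [List.dropLast_singleton, List.append_nil]
          exact Or.inl ⟨hπ, hnm⟩
        · have hst := (hmemP hπ hnm hl hsucc hne hext).1
          have hd : (a :: b :: t').dropLast ∈ ts a :=
            hst.2.2.1 _ hμ (by simp)
          rw [List.dropLast_append_of_ne_nil hμne]
          refine Or.inr ⟨π, (a :: b :: t').dropLast, s, a, rfl, hπ, hnm, hl, ?_, hsucc,
            hne, hext, hd⟩
          rw [head?_dropLast' _ (by simp)]
          rfl
  · -- player 1 moves
    rintro ρ hρ q hlast hown hex
    rcases hρ with ⟨h, hnm⟩ | ⟨π, μ, s, s', rfl, hπ, hnm, hl, hh, hsucc, hne, hext, hμ⟩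
    · obtain ⟨q', ⟨hsucc', hmem⟩, huniq⟩ := hmv1₀ _ h q hlast hown hex
      refine ⟨q', ⟨hsucc', (glue_extA hplays₀ hts1 h hnm).mpr hmem⟩, ?_⟩
      rintro y ⟨hsy, hmy⟩
      exact huniq y ⟨hsy, (glue_extA hplays₀ hts1 h hnm).mp hmy⟩
    · have hμne : μ ≠ [] := by intro h; subst h; simp at hh
      have hst := (hmemP hπ hnm hl hsucc hne hext).1
      have hlast' : μ.getLast? = some q := by
        rwa [List.getLast?_append_of_ne_nil (l₁ := π) hμne] at hlast
      obtain ⟨q', ⟨hsucc', hmem⟩, huniq⟩ := hst.2.2.2.1 μ hμ q hlast' hown hex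
      have hhq : (μ ++ [q']).head? = some s' := by
        rw [List.head?_append_of_ne_nil _ hμne]; exact hh
      refine ⟨q', ⟨hsucc', ?_⟩, ?_⟩
      · rw [List.append_assoc]
        exact (glue_extB hπ hnm hl hhq hsucc hne hext).mpr hmem
      · rintro y ⟨hsy, hmy⟩
        rw [List.append_assoc] at hmy
        have hhy : (μ ++ [y]).head? = some s' := by
          rw [List.head?_append_of_ne_nil _ hμne]; exact hh
        exact huniq y ⟨hsy, (glue_extB hπ hnm hl hhy hsucc hne hext).mp hmy⟩
  · -- player 2 moves
    rintro ρ hρ q hlast hown q' hsucc'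
    rcases hρ with ⟨h, hnm⟩ | ⟨π, μ, s, s', rfl, hπ, hnm, hl, hh, hsucc, hne, hext, hμ⟩
    · exact (glue_extA hplays₀ hts1 h hnm).mpr (hmv2₀ _ h q hlast hown q' hsucc')
    · have hμne : μ ≠ [] := by intro h; subst h; simp at hh
      have hst := (hmemP hπ hnm hl hsucc hne hext).1
      have hlast' : μ.getLast? = some q := by
        rwa [List.getLast?_append_of_ne_nil (l₁ := π) hμne] at hlast
      have hmem := hst.2.2.2.2 μ hμ q hlast' hown q' hsucc'
      have hhq : (μ ++ [q']).head? = some s' := by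
        rw [List.head?_append_of_ne_nil _ hμne]; exact hh
      rw [List.append_assoc]
      exact (glue_extB hπ hnm hl hhq hsucc hne hext).mpr hmem
  · -- terminal condition
    rintro ρ hρ q hlast ht
    rcases hρ with ⟨h, hnm⟩ | ⟨π, μ, s, s', rfl, hπ, hnm, hl, hh, hsucc, hne, hext, hμ⟩
    · exact hterm₀ _ h hnm q hlast ht
    · have hμne : μ ≠ [] := by intro h; subst h; simp at hh
      have hlast' : μ.getLast? = some q := by
        rwa [List.getLast?_append_of_ne_nil (l₁ := π) hμne] at hlast
      exact (hmemP hπ hnm hl hsucc hne hext).2.1 μ hμ q hlast' ht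
  · -- infinite plays
    exact fun f hf => no_prefixIn hw hσ (fun ρ hρ => (hplaysT ρ hρ).1) f hf

end BigStepProof
/-- Big-step acceptance characterization for one-way alternating register automata with
1 register over finite data words: `M` accepts `σ` iff
`{(0, q_I, ∅)} ⇒ P₁ ⇒ ⋯ ⇒ P_{k-1} ⇒ ∅`. -/
theorem oneWayARA1_finitary_bigstep_characterization {A : Type} (M : RA A)
    (hw : M.OneWay) (hn : M.n = 1) (σ : DataWord A) (hσ : σ.IsFinite) :
    Accepts M σ ↔
      ∃ (k : ℕ) (Ps : ℕ → Set (RAState M)), 1 ≤ k ∧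
        Ps 0 = {initState M} ∧ Ps k = ∅ ∧
        ∀ i, i < k → setBigTo M σ (Ps i) (Ps (i + 1)) := by
  classical
  constructor
  · intro hacc
    have key : ∀ p : RAState M, ∃ P',
        (∃ τ, (raGame M σ).IsWinningStrategy true p τ) →
        bigTo M σ p P' ∧ ∀ p' ∈ P',
          (∃ τ', (raGame M σ).IsWinningStrategy true p' τ') ∧
          p'.1 = p.1 + 1 ∧ ((p.1 : ℕ∞) + 1 < σ.len) := by
      intro p
      by_cases h : ∃ τ, (raGame M σ).IsWinningStrategy true p τ
      · obtain ⟨P', h1, h2⟩ := win_bigTo hw hσ h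
        exact ⟨P', fun _ => ⟨h1, h2⟩⟩
      · exact ⟨∅, fun hc => absurd hc h⟩
    choose g hg using key
    let Ps : ℕ → Set (RAState M) :=
      fun n => Nat.rec {initState M} (fun _ S => ⋃ p ∈ S, g p) n
    have hinv : ∀ i, ∀ p ∈ Ps i,
        (∃ τ, (raGame M σ).IsWinningStrategy true p τ) ∧ p.1 = i ∧ ((i : ℕ∞) < σ.len) := by
      intro i
      induction i with
      | zero =>
        rintro p hp
        have hp0 : p ∈ ({initState M} : Set (RAState M)) := hp
        rw [Set.mem_singleton_iff] at hp0
        subst hp0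
        exact ⟨hacc, rfl, by simpa using σ.len_pos⟩
      | succ i ih =>
        rintro p hp
        have hp' : p ∈ ⋃ q ∈ Ps i, g q := hp
        rw [Set.mem_iUnion₂] at hp'
        obtain ⟨q, hq, hpq⟩ := hp'
        obtain ⟨hwq, hq1, -⟩ := ih q hq
        obtain ⟨hw', hpos, hbd⟩ := (hg q hwq).2 p hpq
        refine ⟨hw', by omega, ?_⟩
        rw [hq1] at hbd
        have : ((i : ℕ) + 1 : ℕ∞) < σ.len := by exact_mod_cast hbd
        exact_mod_cast this
    obtain ⟨N, hN⟩ : ∃ N : ℕ, σ.len = (N : ℕ∞) := ⟨σ.len.toNat, (ENat.coe_toNat hσ).symm⟩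
    have hNempty : Ps N = ∅ := by
      rw [Set.eq_empty_iff_forall_notMem]
      intro p hp
      have := (hinv N p hp).2.2
      rw [hN] at this
      exact absurd this (lt_irrefl _)
    have hex : ∃ i, Ps i = ∅ := ⟨N, hNempty⟩
    obtain ⟨k, hk, hkmin⟩ := Nat.lt_wfRel.wf.has_min {i | Ps i = ∅} hex
    refine ⟨k, Ps, ?_, rfl, hk, ?_⟩
    · rcases Nat.eq_zero_or_pos k with h | h
      · rw [h] at hk
        exact absurd hk (by simp [Ps, initState])
      · exact h
    · intro i hik
      have hne : Ps i ≠ ∅ := fun he => hkmin i he hik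
      refine ⟨Set.nonempty_iff_ne_empty.mpr hne, g, ?_, rfl⟩
      intro p hp
      exact (hg p (hinv i p hp).1).1
  · rintro ⟨k, Ps, hk1, h0, hke, hstep⟩
    have down : ∀ j i, i + j = k → ∀ p ∈ Ps i,
        ∃ τ, (raGame M σ).IsWinningStrategy true p τ := by
      intro j
      induction j with
      | zero =>
        intro i hik p hp
        rw [Nat.add_zero] at hik
        subst hik
        rw [hke] at hp
        exact absurd hp (Set.notMem_empty p)
      | succ j ih =>
        intro i hik p hp
        obtain ⟨-, f, hf, hfe⟩ := hstep i (by omega)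
        refine glue_win hw hσ (hf p hp) ?_
        intro p' hp'
        refine ih (i + 1) (by omega) p' ?_
        rw [hfe]
        exact Set.mem_biUnion hp hp'
    exact down k 0 (by omega) (initState M) (by rw [h0]; rfl)
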